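/- Let ℵ_α be an infinite regular cardinal, β ≤ ℵ_α an ordinal, and f : β → (ℵ_α + 1). If the cardinality of {γ < β : f(γ) = ℵ_α} is strictly less than ℵ_α, then there exists an ordinal η with η ≤ β and η < ℵ_α such that f(γ) < ℵ_α for all γ with η ≤ γ < β, and consequently Σ f ≤ ℵ_α·(η+1) < ℵ_α². -/

import Mathlib

noncomputable def transSum (f : Ordinal → Ordinal) (β : Ordinal) : Ordinal :=
  Ordinal.limitRecOn β 0 (fun γ ih => ih + f γ) (fun γ _ ih => Ordinal.bsup γ (fun δ h => ih δ h))

theorem transSum_zero (f : Ordinal.{0} → Ordinal.{0}) : transSum f 0 = 0 := by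
  simp [transSum, Ordinal.limitRecOn_zero]

theorem transSum_succ (f : Ordinal.{0} → Ordinal.{0}) (γ : Ordinal.{0}) :
    transSum f (Order.succ γ) = transSum f γ + f γ := by
  simp [transSum, Ordinal.limitRecOn_succ]

theorem transSum_limit (f : Ordinal.{0} → Ordinal.{0}) {β : Ordinal.{0}} (h : Order.IsSuccLimit β) :
    transSum f β = Ordinal.bsup β (fun δ _ => transSum f δ) := by
  rw [transSum, Ordinal.limitRecOn_limit _ _ _ _ h]
  rfl

/-- If `x < d + c.ord` and `y < c.ord` for infinite `c`, then `x + y < d + c.ord`. -/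
theorem aux_add_lt {c : Cardinal} (hc : Cardinal.aleph0 ≤ c) {x y d : Ordinal}
    (hx : x < d + c.ord) (hy : y < c.ord) : x + y < d + c.ord := by
  have hopos : (0 : Ordinal) < c.ord := by
    rw [Cardinal.lt_ord]
    simpa using lt_of_lt_of_le Cardinal.aleph0_pos hc
  rcases lt_or_ge x d with h | h
  · calc x + y ≤ d + y := add_le_add_left h.le y
    _ < d + c.ord := add_lt_add_right hy d
  · have hr : x - d < c.ord := Ordinal.sub_lt_of_lt_add hx hopos
    have hxd : d + (x - d) = x := Ordinal.add_sub_cancel_of_le h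
    rw [← hxd, add_assoc]
    apply add_lt_add_right
    rw [Cardinal.lt_ord, Ordinal.card_add]
    exact Cardinal.add_lt_of_lt hc (Cardinal.lt_ord.1 hr) (Cardinal.lt_ord.1 hy)

theorem transSum_main_bound {c : Cardinal.{0}} (hreg : c.IsRegular) (β η : Ordinal.{0})
    (hβ : β ≤ c.ord) (hη : η ≤ β) (f : Ordinal.{0} → Ordinal.{0})
    (hf : ∀ γ < β, f γ ≤ c.ord)
    (htail : ∀ γ, η ≤ γ → γ < β → f γ < c.ord) :
    ∀ β' ≤ β, (β' ≤ η → transSum f β' ≤ c.ord * β') ∧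
      (β' < β → transSum f β' < c.ord * η + c.ord) ∧
      transSum f β' ≤ c.ord * η + c.ord := by
  have hc : Cardinal.aleph0 ≤ c := hreg.1
  have hopos : (0 : Ordinal) < c.ord := by
    rw [Cardinal.lt_ord]
    simpa using lt_of_lt_of_le Cardinal.aleph0_pos hc
  have hbase : c.ord * η < c.ord * η + c.ord := by
    have := (add_lt_add_iff_left (c.ord * η)).2 hopos
    simpa using this
  intro β'
  induction β' using Ordinal.limitRecOn with
  | zero =>
    intro _
    refine ⟨fun _ => by simp [transSum_zero], fun _ => ?_, ?_⟩
    · rw [transSum_zero]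
      exact lt_of_lt_of_le hopos le_add_self
    · rw [transSum_zero]
      exact le_of_lt (lt_of_lt_of_le hopos le_add_self)
  | add_one γ ih =>
    rw [Ordinal.add_one_eq_succ]
    intro hsb
    have hγβ : γ < β := Order.succ_le_iff.1 hsb
    have IH := ih hγβ.le
    have heq := transSum_succ f γ
    have hstrict : transSum f (Order.succ γ) < c.ord * η + c.ord := by
      rcases lt_or_ge γ η with h | h
      · have h1 : transSum f (Order.succ γ) ≤ c.ord * Order.succ γ := by
          rw [heq, Ordinal.mul_succ]
          exact add_le_add (IH.1 h.le) (hf γ hγβ)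
        have h2 : c.ord * Order.succ γ ≤ c.ord * η :=
          mul_le_mul_right (Order.succ_le_iff.2 h) c.ord
        exact lt_of_le_of_lt (h1.trans h2) hbase
      · rw [heq]
        exact aux_add_lt hc (IH.2.1 hγβ) (htail γ h hγβ)
    refine ⟨fun hsη => ?_, fun _ => hstrict, hstrict.le⟩
    · have h : γ < η := Order.succ_le_iff.1 hsη
      rw [heq, Ordinal.mul_succ]
      exact add_le_add (IH.1 h.le) (hf γ hγβ)
  | limit β' hlim ih =>
    intro hb
    have heq := transSum_limit f hlim
    refine ⟨fun hβ'η => ?_, fun hb' => ?_, ?_⟩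
    · rw [heq]
      apply Ordinal.bsup_le
      intro δ h
      exact ((ih δ h (h.le.trans hb)).1 (h.le.trans hβ'η)).trans
        (mul_le_mul_right h.le c.ord)
    · have hcβ' : β'.card < c := Cardinal.lt_ord.1 (lt_of_lt_of_le hb' hβ)
      have hts : Ordinal.bsup β' (fun δ _ => transSum f δ - c.ord * η) < c.ord := by
        apply Cardinal.bsup_lt_ord_of_isRegular hreg hcβ'
        intro δ h
        exact Ordinal.sub_lt_of_lt_add ((ih δ h (h.le.trans hb)).2.1 (h.trans hb')) hopos
      have hle : transSum f β' ≤
          c.ord * η + Ordinal.bsup β' (fun δ _ => transSum f δ - c.ord * η) := by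
        rw [heq]
        apply Ordinal.bsup_le
        intro δ h
        exact (Ordinal.le_add_sub _ _).trans
          (add_le_add_right (Ordinal.le_bsup (fun δ _ => transSum f δ - c.ord * η) δ h) _)
      exact lt_of_le_of_lt hle (add_lt_add_right hts _)
    · rw [heq]
      apply Ordinal.bsup_le
      intro δ h
      exact ((ih δ h (h.le.trans hb)).2.1 (lt_of_lt_of_le h hb)).le

theorem transSum_lt_sq_of_small (α β : Ordinal.{0}) (hreg : (Cardinal.aleph α).IsRegular)
    (hβ : β ≤ (Cardinal.aleph α).ord) (f : Ordinal.{0} → Ordinal.{0})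
    (hf : ∀ γ < β, f γ ≤ (Cardinal.aleph α).ord)
    (hcard : Cardinal.mk {γ : Ordinal.{0} // γ < β ∧ f γ = (Cardinal.aleph α).ord} <
      Cardinal.lift.{1} (Cardinal.aleph α)) :
    ∃ η : Ordinal, η ≤ β ∧ η < (Cardinal.aleph α).ord ∧
      (∀ γ, η ≤ γ → γ < β → f γ < (Cardinal.aleph α).ord) ∧
      transSum f β ≤ (Cardinal.aleph α).ord * (η + 1) ∧
      (Cardinal.aleph α).ord * (η + 1) < (Cardinal.aleph α).ord * (Cardinal.aleph α).ord := by
  set c := Cardinal.aleph α with hc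
  set o := c.ord with ho
  have hcinf : Cardinal.aleph0 ≤ c := Cardinal.aleph0_le_aleph α
  have holim : Order.IsSuccLimit o := Cardinal.isSuccLimit_ord hcinf
  have hopos : (0 : Ordinal) < o := holim.pos
  -- index type in Type 0 for the "bad" set
  let e := Ordinal.ToType.mk (o := β)
  let ι := {x : β.ToType // f ((e.symm x : Set.Iio β) : Ordinal) = o}
  -- equivalence with the subtype in the statement
  have hequiv : Nonempty (ι ≃ {γ : Ordinal.{0} // γ < β ∧ f γ = o}) := by
    refine ⟨⟨fun x => ⟨((e.symm x.1 : Set.Iio β) : Ordinal), (e.symm x.1).2, x.2⟩,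
      fun s => ⟨e ⟨s.1, s.2.1⟩, ?_⟩, fun x => ?_, fun s => ?_⟩⟩
    · simp only [OrderIso.symm_apply_apply]
      exact s.2.2
    · apply Subtype.ext
      simp
      exact e.apply_symm_apply x.1
    · apply Subtype.ext
      simp
  have hι : Cardinal.mk ι < c := by
    have h1 : Cardinal.lift.{1} (Cardinal.mk ι) =
        Cardinal.mk {γ : Ordinal.{0} // γ < β ∧ f γ = o} := by
      have := (Cardinal.lift_mk_eq'.2 hequiv)
      simpa using this
    rw [← Cardinal.lift_lt.{_, 1}, h1]
    exact hcard
  -- the bound η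
  let g : ι → Ordinal := fun x => ((e.symm x.1 : Set.Iio β) : Ordinal) + 1
  refine ⟨iSup g, ?_, ?_, ?_, ?_, ?_⟩
  · apply Ordinal.iSup_le
    intro x
    have : ((e.symm x.1 : Set.Iio β) : Ordinal) < β := (e.symm x.1).2
    exact Order.add_one_le_of_lt this
  · apply Cardinal.iSup_lt_ord_of_isRegular hreg hι
    intro x
    have h1 : ((e.symm x.1 : Set.Iio β) : Ordinal) < o := lt_of_lt_of_le (e.symm x.1).2 hβ
    show ((e.symm x.1 : Set.Iio β) : Ordinal) + 1 < o
    rw [Ordinal.add_one_eq_succ]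
    exact holim.succ_lt h1
  · -- tail property
    intro γ hηγ hγβ
    rcases lt_or_eq_of_le (hf γ hγβ) with h | h
    · exact h
    · exfalso
      have hx : f ((e.symm (e ⟨γ, hγβ⟩) : Set.Iio β) : Ordinal) = o := by
        simp only [OrderIso.symm_apply_apply]
        exact h
      let x : ι := ⟨e ⟨γ, hγβ⟩, hx⟩
      have hgx : g x = γ + 1 := by
        simp only [g, x, OrderIso.symm_apply_apply]
      have : γ + 1 ≤ iSup g := hgx ▸ Ordinal.le_iSup g x
      have : γ < γ := lt_of_lt_of_le (lt_of_lt_of_le (lt_add_one γ) this) hηγ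
      exact absurd this (lt_irrefl γ)
  · -- transSum bound
    have hη : iSup g ≤ β := by
      apply Ordinal.iSup_le
      intro x
      exact Order.add_one_le_of_lt (e.symm x.1).2
    have htail : ∀ γ, iSup g ≤ γ → γ < β → f γ < o := by
      intro γ hηγ hγβ
      rcases lt_or_eq_of_le (hf γ hγβ) with h | h
      · exact h
      · exfalso
        have hx : f ((e.symm (e ⟨γ, hγβ⟩) : Set.Iio β) : Ordinal) = o := by
          simp only [OrderIso.symm_apply_apply]
          exact h
        let x : ι := ⟨e ⟨γ, hγβ⟩, hx⟩
        have hgx : g x = γ + 1 := by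
          simp only [g, x, OrderIso.symm_apply_apply]
        have : γ + 1 ≤ iSup g := hgx ▸ Ordinal.le_iSup g x
        have : γ < γ := lt_of_lt_of_le (lt_of_lt_of_le (lt_add_one γ) this) hηγ
        exact absurd this (lt_irrefl γ)
    have := (transSum_main_bound hreg β (iSup g) hβ hη f hf htail β le_rfl).2.2
    calc transSum f β ≤ o * iSup g + o := this
    _ = o * (iSup g + 1) := by rw [mul_add, mul_one]
    _ ≤ o * (iSup g + 1) := le_rfl
  · -- final strict inequality
    have hηo : iSup g < o := by
      apply Cardinal.iSup_lt_ord_of_isRegular hreg hι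
      intro x
      have h1 : ((e.symm x.1 : Set.Iio β) : Ordinal) < o := lt_of_lt_of_le (e.symm x.1).2 hβ
      show ((e.symm x.1 : Set.Iio β) : Ordinal) + 1 < o
      rw [Ordinal.add_one_eq_succ]
      exact holim.succ_lt h1
    have hs : iSup g + 1 < o := by
      rw [Ordinal.add_one_eq_succ]
      exact holim.succ_lt hηo
    exact mul_lt_mul_of_pos_left hs hopos
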